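/- Fix a natural number q and let R_q ⊆ ℝ³ be the Reeve tetrahedron, i.e. the convex hull of the four integer points (0,0,0), (1,0,0), (0,1,0) and (1,q,q+1). Then for every natural number m, 6·#(m·R_q ∩ ℤ³) = (q+1)·m³ + 6·m² + (11 − q)·m + 6 (an identity of integers). Equivalently, the Ehrhart polynomial of R_q is E(x) = ((q+1)/6)x³ + x² + ((11−q)/6)x + 1; in particular, for q ≥ 12 this polynomial has a negative coefficient. -/

import Mathlib

open scoped Pointwise

set_option maxHeartbeats 1000000

namespace ReeveAux

open Finset

def A2 (n : ℕ) : Finset (ℕ × ℕ) :=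
  (range (n+1) ×ˢ range (n+1)).filter fun t => t.1 + t.2 ≤ n
def A3 (n : ℕ) : Finset (ℕ × ℕ × ℕ) :=
  (range (n+1) ×ˢ range (n+1) ×ˢ range (n+1)).filter fun t => t.1 + t.2.1 + t.2.2 ≤ n

lemma mem_A2 {n a b : ℕ} : (a, b) ∈ A2 n ↔ a + b ≤ n := by
  simp only [A2, mem_filter, mem_product, mem_range]; omega
lemma mem_A3 {n a b c : ℕ} : (a, b, c) ∈ A3 n ↔ a + b + c ≤ n := by
  simp only [A3, mem_filter, mem_product, mem_range]; omega

lemma card_A2 (n : ℕ) : 2 * (A2 n).card = (n+1) * (n+2) := by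
  induction n with
  | zero => decide
  | succ n ih =>
    have hsplit : A3 0 = A3 0 := rfl
    have h1 : A2 (n+1) = A2 n ∪ (range (n+2)).image (fun a => (a, n+1-a)) := by
      ext ⟨a, b⟩
      simp only [mem_A2, mem_union, mem_image, mem_range, Prod.mk.injEq]
      constructor
      · intro h
        rcases le_or_gt (a+b) n with h'|h'
        · exact Or.inl h'
        · exact Or.inr ⟨a, by omega, rfl, by omega⟩
      · rintro (h | ⟨x, hx, rfl, rfl⟩) <;> omega
    have hdisj : Disjoint (A2 n) ((range (n+2)).image (fun a => (a, n+1-a))) := by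
      rw [disjoint_left]
      rintro ⟨a,b⟩ ha hb
      simp only [mem_A2] at ha
      simp only [mem_image, mem_range, Prod.mk.injEq] at hb
      obtain ⟨x, hx, rfl, rfl⟩ := hb
      omega
    have hcard : ((range (n+2)).image (fun a => (a, n+1-a))).card = n+2 := by
      rw [Finset.card_image_of_injective _ (fun x y h => (Prod.mk.injEq .. ▸ h).1), card_range]
    rw [h1, card_union_of_disjoint hdisj, hcard]
    nlinarith [ih]

lemma card_A3 (n : ℕ) : 6 * (A3 n).card = (n+1) * (n+2) * (n+3) := by
  induction n with
  | zero => decide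
  | succ n ih =>
    have h1 : A3 (n+1) = A3 n ∪ (A2 (n+1)).image (fun t => (t.1, t.2, n+1-t.1-t.2)) := by
      ext ⟨a, b, c⟩
      simp only [mem_A3, mem_union, mem_image, Prod.exists, Prod.mk.injEq, mem_A2]
      constructor
      · intro h
        rcases le_or_gt (a+b+c) n with h'|h'
        · exact Or.inl h'
        · exact Or.inr ⟨a, b, by omega, rfl, rfl, by omega⟩
      · rintro (h | ⟨x, y, hx, rfl, rfl, rfl⟩) <;> omega
    have hdisj : Disjoint (A3 n) ((A2 (n+1)).image (fun t => (t.1, t.2, n+1-t.1-t.2))) := by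
      rw [disjoint_left]
      rintro ⟨a,b,c⟩ ha hb
      simp only [mem_A3] at ha
      simp only [mem_image, Prod.exists, Prod.mk.injEq, mem_A2] at hb
      obtain ⟨x, y, hx, rfl, rfl, rfl⟩ := hb
      omega
    have hinj : Set.InjOn (fun t : ℕ × ℕ => (t.1, t.2, n+1-t.1-t.2)) (A2 (n+1)) := by
      rintro ⟨a,b⟩ _ ⟨c,d⟩ _ h
      simp only [Prod.mk.injEq] at h
      simp [h.1, h.2.1]
    rw [h1, card_union_of_disjoint hdisj, Finset.card_image_of_injOn hinj]
    nlinarith [ih, card_A2 (n+1)]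


def eps (r : ℕ) : ℕ := if r = 0 then 0 else 1

def Dom (q m : ℕ) : Finset (ℕ × ℕ × ℕ × ℕ) :=
  (range (q+1) ×ˢ range (m+1) ×ˢ range (m+1) ×ˢ range (m+1)).filter
    fun x => x.2.1 + x.2.2.1 + x.2.2.2 + 2 * eps x.1 ≤ m

lemma mem_Dom {q m r j u w : ℕ} :
    (r, j, u, w) ∈ Dom q m ↔ r ≤ q ∧ j + u + w + 2 * eps r ≤ m := by
  simp only [Dom, mem_filter, mem_product, mem_range]
  constructor
  · rintro ⟨⟨h1, h2, h3, h4⟩, h5⟩; exact ⟨by omega, h5⟩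
  · rintro ⟨h1, h2⟩; exact ⟨⟨by omega, by omega, by omega, by omega⟩, h2⟩

lemma card_Dom (q m : ℕ) :
    6 * (Dom q m).card = (m+1) * (m+2) * (m+3) + q * ((m-1) * m * (m+1)) := by
  have hsplit : Dom q m =
      (A3 m).image (fun t => (0, t)) ∪
        (if 2 ≤ m then (Icc 1 q) ×ˢ A3 (m-2) else ∅) := by
    ext ⟨r, j, u, w⟩
    simp only [mem_Dom, mem_union, mem_image, Prod.exists, Prod.mk.injEq, mem_A3]
    constructor
    · rintro ⟨h1, h2⟩
      rcases Nat.eq_zero_or_pos r with rfl | hr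
      · exact Or.inl ⟨j, u, w, by simpa [eps] using h2, rfl, rfl, rfl, rfl⟩
      · right
        have he : eps r = 1 := by simp [eps]; omega
        rw [if_pos (by omega : 2 ≤ m)]
        simp only [mem_product, mem_Icc, mem_A3]
        exact ⟨by omega, by omega⟩
    · rintro (⟨a, b, c, h, rfl, rfl, rfl, rfl⟩ | h)
      · exact ⟨by omega, by simpa [eps] using h⟩
      · by_cases hm : 2 ≤ m
        · rw [if_pos hm] at h
          simp only [mem_product, mem_Icc, mem_A3] at h
          have he : eps r = 1 := by simp [eps]; omega
          exact ⟨h.1.2, by omega⟩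
        · rw [if_neg hm] at h; exact absurd h (notMem_empty _)
  have hdisj : Disjoint ((A3 m).image (fun t => (0, t)))
      (if 2 ≤ m then (Icc 1 q) ×ˢ A3 (m-2) else ∅) := by
    rw [disjoint_left]
    rintro ⟨r, t⟩ ha hb
    simp only [mem_image, Prod.mk.injEq] at ha
    obtain ⟨x, _, rfl, rfl⟩ := ha
    by_cases hm : 2 ≤ m
    · rw [if_pos hm] at hb
      simp only [mem_product, mem_Icc] at hb
      omega
    · rw [if_neg hm] at hb; exact absurd hb (notMem_empty _)
  have hinj : ((A3 m).image (fun t => (0, t))).card = (A3 m).card :=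
    Finset.card_image_of_injective _ (fun x y h => (Prod.mk.injEq .. ▸ h).2)
  rw [hsplit, card_union_of_disjoint hdisj, hinj]
  by_cases hm : 2 ≤ m
  · obtain ⟨k, rfl⟩ : ∃ k, m = k + 2 := ⟨m - 2, by omega⟩
    rw [if_pos hm, card_product, Nat.card_Icc]
    have h3 := card_A3 (k+2)
    have h2 := card_A3 k
    have e0 : q + 1 - 1 = q := rfl
    rw [e0]
    have e1 : k + 2 - 1 = k + 1 := rfl
    have e2 : k + 2 - 2 = k := rfl
    rw [e1, e2]
    have h2q : q * (6 * (A3 k).card) = q * ((k + 1) * (k + 2) * (k + 3)) := by rw [h2]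
    nlinarith [h3, h2q]
  · interval_cases m <;> rw [if_neg hm] <;> simp <;> nlinarith [card_A3 0, card_A3 1]



def E (q : ℕ) (x : ℕ × ℕ × ℕ × ℕ) : Fin 3 → ℤ :=
  ![(x.2.1 : ℤ) + eps x.1 + x.2.2.1,
    (q : ℤ) * x.2.1 + x.1 + x.2.2.2,
    (x.2.1 : ℤ) * (q + 1) + x.1]

lemma euclid_aux {q j r : ℕ} (h1 : r ≤ q) :
    r = (j * (q+1) + r) % (q+1) ∧ j = (j * (q+1) + r) / (q+1) := by
  constructor
  · rw [Nat.mul_add_mod', Nat.mod_eq_of_lt (by omega)]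
  · rw [Nat.mul_comm, Nat.mul_add_div (by omega), Nat.div_eq_of_lt (by omega)]
    omega

lemma euclid {q j r j' r' : ℕ} (h1 : r ≤ q) (h2 : r' ≤ q)
    (h : j * (q+1) + r = j' * (q+1) + r') : j = j' ∧ r = r' := by
  obtain ⟨m1, d1⟩ := euclid_aux (j := j) h1
  obtain ⟨m2, d2⟩ := euclid_aux (j := j') h2
  rw [h] at m1 d1
  exact ⟨d1.trans d2.symm, m1.trans m2.symm⟩

def Sol (q m : ℕ) : Set (Fin 3 → ℤ) :=
  {p | 0 ≤ p 2 ∧ p 2 ≤ (q+1) * p 0 ∧ (q : ℤ) * p 2 ≤ (q+1) * p 1 ∧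
    ((q : ℤ)+1)*(p 0 + p 1) ≤ ((q : ℤ)+1)*(m : ℤ) + (q : ℤ) * p 2}

lemma injOn_E (q m : ℕ) : Set.InjOn (E q) ↑(Dom q m) := by
  rintro ⟨r, j, u, w⟩ hx ⟨r', j', u', w'⟩ hy hE
  simp only [Finset.coe_sort_coe, Finset.mem_coe, mem_Dom] at hx hy
  have h2 : (j : ℤ) * (q+1) + r = (j' : ℤ) * (q+1) + r' := by
    have := congrFun hE 2
    simpa [E] using this
  have h2' : j * (q+1) + r = j' * (q+1) + r' := by exact_mod_cast h2
  obtain ⟨rfl, rfl⟩ := euclid hx.1 hy.1 h2'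
  have h0 : (j : ℤ) + eps r + u = (j : ℤ) + eps r + u' := by
    have := congrFun hE 0
    simpa [E] using this
  have h1 : (q : ℤ) * j + r + w = (q : ℤ) * j + r + w' := by
    have := congrFun hE 1
    simpa [E] using this
  have : u = u' := by exact_mod_cast add_left_cancel h0
  have : w = w' := by exact_mod_cast add_left_cancel h1
  simp_all

lemma sol_eq_image (q m : ℕ) : Sol q m = E q '' ↑(Dom q m) := by
  ext p
  constructor
  · rintro ⟨hp2, hc2, hc3, hc4⟩
    have hq1 : (0 : ℤ) < (q : ℤ) + 1 := by positivity
    have hp0 : 0 ≤ p 0 := by nlinarith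
    have hp1 : 0 ≤ p 1 := by nlinarith [mul_nonneg (show (0:ℤ) ≤ q by positivity) hp2]
    obtain ⟨a, ha⟩ : ∃ a : ℕ, (a : ℤ) = p 0 := ⟨(p 0).toNat, Int.toNat_of_nonneg hp0⟩
    obtain ⟨b, hb⟩ : ∃ b : ℕ, (b : ℤ) = p 1 := ⟨(p 1).toNat, Int.toNat_of_nonneg hp1⟩
    obtain ⟨k, hkz⟩ : ∃ k : ℕ, (k : ℤ) = p 2 := ⟨(p 2).toNat, Int.toNat_of_nonneg hp2⟩
    obtain ⟨j, r, hk, hr⟩ : ∃ j r, (q+1) * j + r = k ∧ r ≤ q :=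
      ⟨k / (q+1), k % (q+1), Nat.div_add_mod k (q+1),
        by have := Nat.mod_lt k (show 0 < q+1 by omega); omega⟩
    have c2 : k ≤ (q+1) * a := by
      have : (k : ℤ) ≤ ((q:ℤ)+1) * a := by rw [ha, hkz]; exact hc2
      exact_mod_cast this
    have c3 : q * k ≤ (q+1) * b := by
      have : (q:ℤ) * k ≤ ((q:ℤ)+1) * b := by rw [hb, hkz]; exact hc3
      exact_mod_cast this
    have c4 : (q+1) * (a+b) ≤ (q+1) * m + q * k := by
      have : ((q:ℤ)+1) * ((a:ℤ)+b) ≤ ((q:ℤ)+1) * m + q * k := by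
        push_cast
        rw [ha, hb, hkz]; exact_mod_cast hc4
      exact_mod_cast this
    -- a ≥ j + eps r
    have hja : j + eps r ≤ a := by
      rcases Nat.eq_zero_or_pos r with hr0 | hr0
      · have h' : (q+1) * j ≤ (q+1) * a := by omega
        have := Nat.le_of_mul_le_mul_left h' (show 0 < q+1 by omega)
        simp [eps, hr0]; omega
      · have hlt : (q+1) * j < (q+1) * a := by omega
        have := Nat.lt_of_mul_lt_mul_left hlt
        have he : eps r = 1 := by simp [eps]; omega
        omega
    -- b ≥ q*j + r
    have hjb : q * j + r ≤ b := by
      rcases Nat.eq_zero_or_pos r with hr0 | hr0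
      · have e : q * k = (q+1) * (q * j) := by
          rw [← hk, hr0]; ring
        have h' : (q+1) * (q * j) ≤ (q+1) * b := by omega
        have := Nat.le_of_mul_le_mul_left h' (show 0 < q+1 by omega)
        omega
      · obtain ⟨r', rfl⟩ : ∃ r', r = r' + 1 := ⟨r - 1, by omega⟩
        have emul : q * (r'+1) = r' * (q+1) + (q - r') := by
          zify [show r' ≤ q by omega]; ring
        have e2 : q * k = (q+1) * (q * j + r') + (q - r') := by
          calc q * k = q * ((q+1) * j) + q * (r'+1) := by rw [← hk]; ring
          _ = q * ((q+1) * j) + (r' * (q+1) + (q - r')) := by rw [emul]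
          _ = (q+1) * (q * j + r') + (q - r') := by ring
        have hd : 1 ≤ q - r' := by omega
        have hlt : (q+1) * (q * j + r') < (q+1) * b := by omega
        have := Nat.lt_of_mul_lt_mul_left hlt
        omega
    obtain ⟨u, hu⟩ := Nat.le.dest hja
    obtain ⟨w, hw⟩ := Nat.le.dest hjb
    -- main inequality
    have hsum : j + u + w + 2 * eps r ≤ m := by
      have e : q * k = (q+1) * (q*j) + q * r := by rw [← hk]; ring
      have expand : (q+1) * (a+b) =
          (q+1) * (j + u + w + eps r) + (q+1) * (q*j) + (q+1) * r := by
        rw [← hu, ← hw]; ring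
      have hqr : (q+1) * r = q * r + r := by ring
      have key : (q+1) * (j + u + w + eps r) + r ≤ (q+1) * m := by omega
      rcases Nat.eq_zero_or_pos r with hr0 | hr0
      · have he : eps r = 0 := by simp [eps, hr0]
        have h' : (q+1) * (j+u+w) ≤ (q+1) * m := by
          have h'' : (q+1) * (j+u+w) = (q+1) * (j + u + w + eps r) := by rw [he]; ring
          omega
        have := Nat.le_of_mul_le_mul_left h' (show 0 < q+1 by omega)
        omega
      · have he : eps r = 1 := by simp [eps]; omega
        have hlt : (q+1) * (j+u+w+1) < (q+1) * m := by
          have h'' : (q+1) * (j+u+w+1) = (q+1) * (j + u + w + eps r) := by rw [he]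
          omega
        have := Nat.lt_of_mul_lt_mul_left hlt
        omega
    refine ⟨(r, j, u, w), by simpa [Finset.mem_coe] using mem_Dom.mpr ⟨hr, hsum⟩, ?_⟩
    funext i
    fin_cases i
    · show (j : ℤ) + eps r + u = p 0
      rw [← ha, ← hu]; push_cast; ring
    · show (q : ℤ) * j + r + w = p 1
      rw [← hb, ← hw]; push_cast; ring
    · show (j : ℤ) * ((q:ℤ)+1) + r = p 2
      rw [← hkz, ← hk]; push_cast; ring

  · rintro ⟨⟨r, j, u, w⟩, hx, rfl⟩
    simp only [Finset.mem_coe, mem_Dom] at hx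
    obtain ⟨hr, hsum⟩ := hx
    have hq1 : (0 : ℤ) < (q : ℤ) + 1 := by positivity
    have e0 : E q (r,j,u,w) 0 = (j : ℤ) + eps r + u := by simp [E]
    have e1 : E q (r,j,u,w) 1 = (q : ℤ) * j + r + w := by simp [E]
    have e2 : E q (r,j,u,w) 2 = (j : ℤ) * ((q:ℤ)+1) + r := by simp [E]
    refine ⟨by rw [e2]; positivity, ?_, ?_, ?_⟩
    · rw [e0, e2]
      rcases Nat.eq_zero_or_pos r with hr0 | hr0
      · simp [eps, hr0]
        nlinarith [Nat.cast_nonneg (α := ℤ) u, Nat.cast_nonneg (α := ℤ) j]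
      · have he : eps r = 1 := by simp [eps]; omega
        rw [he]
        have h1 : (r : ℤ) ≤ q := by exact_mod_cast hr
        push_cast
        nlinarith [Nat.cast_nonneg (α := ℤ) u, Nat.cast_nonneg (α := ℤ) j]
    · rw [e1, e2]
      nlinarith [Nat.cast_nonneg (α := ℤ) w, Nat.cast_nonneg (α := ℤ) r,
        Nat.cast_nonneg (α := ℤ) j, Nat.cast_nonneg (α := ℤ) q]
    · rw [e0, e1, e2]
      have hs : (j : ℤ) + u + w + 2 * (eps r : ℤ) ≤ m := by exact_mod_cast hsum
      rcases Nat.eq_zero_or_pos r with hr0 | hr0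
      · simp only [hr0, eps, if_pos rfl] at hs ⊢
        push_cast at hs ⊢
        nlinarith [hs]
      · have he : eps r = 1 := by simp [eps]; omega
        rw [he] at hs ⊢
        have h1 : (r : ℤ) ≤ q := by exact_mod_cast hr
        have h2 : (1 : ℤ) ≤ r := by exact_mod_cast hr0
        push_cast at hs ⊢
        nlinarith [hs]

lemma ncard_sol (q m : ℕ) : (Sol q m).ncard = (Dom q m).card := by
  rw [sol_eq_image, Set.ncard_image_of_injOn (injOn_E q m), Set.ncard_coe_finset]


lemma mem_dilate (q m : ℕ) (P : Set (Fin 3 → ℝ))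
    (hP : P = convexHull ℝ
      {![0, 0, 0], ![1, 0, 0], ![0, 1, 0], ![1, (q : ℝ), (q : ℝ) + 1]})
    (p : Fin 3 → ℤ) :
    ((fun i => (p i : ℝ)) ∈ (m : ℝ) • P) ↔ p ∈ Sol q m := by
  set v0 : Fin 3 → ℝ := ![0, 0, 0] with hv0
  set v1 : Fin 3 → ℝ := ![1, 0, 0] with hv1
  set v2 : Fin 3 → ℝ := ![0, 1, 0] with hv2
  set v3 : Fin 3 → ℝ := ![1, (q : ℝ), (q : ℝ) + 1] with hv3
  set S : Set (Fin 3 → ℝ) := {v0, v1, v2, v3} with hS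
  have hQ : (0 : ℝ) < (q : ℝ) + 1 := by positivity
  have hsmulS : (m : ℝ) • S = {(m:ℝ) • v0, (m:ℝ) • v1, (m:ℝ) • v2, (m:ℝ) • v3} := by
    rw [hS]
    rw [Set.smul_set_insert, Set.smul_set_insert, Set.smul_set_insert,
      Set.smul_set_singleton]
  constructor
  · intro h
    rw [hP, ← convexHull_smul, hsmulS] at h
    have key : ∀ (c0 c1 c2 c3 : ℝ),
        ((m:ℝ) • v0) 2 * c2 ≤ c0 * ((m:ℝ) • v0) 0 + c1 * ((m:ℝ) • v0) 1 + c3 →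
        True → False → True := fun _ _ _ _ _ _ h => h.elim
    -- four halfspace arguments
    have hcvx : ∀ (c0 c1 c2 c3 : ℝ),
        Convex ℝ {x : Fin 3 → ℝ | c0 * x 0 + c1 * x 1 + c2 * x 2 ≤ c3} := by
      intro c0 c1 c2 c3
      have : IsLinearMap ℝ (fun x : Fin 3 → ℝ => c0 * x 0 + c1 * x 1 + c2 * x 2) := by
        constructor
        · intro x y; simp [Pi.add_apply]; ring
        · intro c x; simp [Pi.smul_apply, smul_eq_mul]; ring
      exact convex_halfSpace_le this c3
    have mem_half : ∀ (c0 c1 c2 c3 : ℝ),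
        (c0 * ((m:ℝ) • v0) 0 + c1 * ((m:ℝ) • v0) 1 + c2 * ((m:ℝ) • v0) 2 ≤ c3) →
        (c0 * ((m:ℝ) • v1) 0 + c1 * ((m:ℝ) • v1) 1 + c2 * ((m:ℝ) • v1) 2 ≤ c3) →
        (c0 * ((m:ℝ) • v2) 0 + c1 * ((m:ℝ) • v2) 1 + c2 * ((m:ℝ) • v2) 2 ≤ c3) →
        (c0 * ((m:ℝ) • v3) 0 + c1 * ((m:ℝ) • v3) 1 + c2 * ((m:ℝ) • v3) 2 ≤ c3) →
        c0 * (p 0 : ℝ) + c1 * (p 1 : ℝ) + c2 * (p 2 : ℝ) ≤ c3 := by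
      intro c0 c1 c2 c3 h0 h1 h2 h3
      have hsub : ({(m:ℝ) • v0, (m:ℝ) • v1, (m:ℝ) • v2, (m:ℝ) • v3} : Set (Fin 3 → ℝ)) ⊆
          {x : Fin 3 → ℝ | c0 * x 0 + c1 * x 1 + c2 * x 2 ≤ c3} := by
        rintro x (rfl | rfl | rfl | rfl)
        exacts [h0, h1, h2, h3]
      exact convexHull_min hsub (hcvx c0 c1 c2 c3) h
    have hv0e : ∀ i, ((m:ℝ) • v0) i = 0 := by
      intro i; fin_cases i <;> simp [hv0]
    have hv1e : ((m:ℝ) • v1) 0 = m ∧ ((m:ℝ) • v1) 1 = 0 ∧ ((m:ℝ) • v1) 2 = 0 := by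
      refine ⟨?_, ?_, ?_⟩ <;> simp [hv1]
    have hv2e : ((m:ℝ) • v2) 0 = 0 ∧ ((m:ℝ) • v2) 1 = m ∧ ((m:ℝ) • v2) 2 = 0 := by
      refine ⟨?_, ?_, ?_⟩ <;> simp [hv2]
    have hv3e : ((m:ℝ) • v3) 0 = m ∧ ((m:ℝ) • v3) 1 = m * q ∧ ((m:ℝ) • v3) 2 = m * (q+1) := by
      refine ⟨?_, ?_, ?_⟩ <;> simp [hv3]
    obtain ⟨h10, h11, h12⟩ := hv1e
    obtain ⟨h20, h21, h22⟩ := hv2e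
    obtain ⟨h30, h31, h32⟩ := hv3e
    have hm0 : (0:ℝ) ≤ m := Nat.cast_nonneg m
    have hq0 : (0:ℝ) ≤ q := Nat.cast_nonneg q
    -- condition 1 : 0 ≤ p 2
    have i1 : (0:ℝ) ≤ (p 2 : ℝ) := by
      have := mem_half 0 0 (-1) 0 ?_ ?_ ?_ ?_
      · linarith
      all_goals simp [hv0e, h10, h11, h12, h20, h21, h22, h30, h31, h32]
      all_goals nlinarith [hm0, hq0, mul_nonneg hm0 hq0]
    have i2 : (p 2 : ℝ) ≤ ((q:ℝ)+1) * (p 0 : ℝ) := by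
      have := mem_half (-(q+1)) 0 1 0 ?_ ?_ ?_ ?_
      · linarith
      all_goals simp [hv0e, h10, h11, h12, h20, h21, h22, h30, h31, h32]
      all_goals nlinarith [hm0, hq0, mul_nonneg hm0 hq0]
    have i3 : (q:ℝ) * (p 2 : ℝ) ≤ ((q:ℝ)+1) * (p 1 : ℝ) := by
      have := mem_half 0 (-(q+1)) q 0 ?_ ?_ ?_ ?_
      · linarith
      all_goals simp [hv0e, h10, h11, h12, h20, h21, h22, h30, h31, h32]
      all_goals nlinarith [hm0, hq0, mul_nonneg hm0 hq0]
    have i4 : ((q:ℝ)+1) * ((p 0:ℝ) + (p 1:ℝ)) ≤ ((q:ℝ)+1) * (m:ℝ) + (q:ℝ) * (p 2:ℝ) := by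
      have := mem_half (q+1) (q+1) (-q) (((q:ℝ)+1) * m) ?_ ?_ ?_ ?_
      · linarith
      all_goals simp [hv0e, h10, h11, h12, h20, h21, h22, h30, h31, h32]
      all_goals nlinarith [hm0, hq0, mul_nonneg hm0 hq0]
    refine ⟨by exact_mod_cast i1, by exact_mod_cast i2, by exact_mod_cast i3, by exact_mod_cast i4⟩
  · rintro ⟨hp2, hc2, hc3, hc4⟩
    have hc2' : (p 2 : ℝ) ≤ ((q:ℝ)+1) * (p 0:ℝ) := by exact_mod_cast hc2
    have hc3' : (q:ℝ) * (p 2:ℝ) ≤ ((q:ℝ)+1) * (p 1:ℝ) := by exact_mod_cast hc3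
    have hc4' : ((q:ℝ)+1) * ((p 0:ℝ) + (p 1:ℝ)) ≤ ((q:ℝ)+1) * (m:ℝ) + (q:ℝ) * (p 2:ℝ) := by
      exact_mod_cast hc4
    have hp2' : (0:ℝ) ≤ (p 2:ℝ) := by exact_mod_cast hp2
    rcases Nat.eq_zero_or_pos m with rfl | hm
    · -- m = 0 : point must be the origin
      have hq1 : (0:ℤ) < (q:ℤ) + 1 := by positivity
      have hfac : ((q:ℤ)+1)*(p 0 + p 1) = ((q:ℤ)+1)*(p 0) + ((q:ℤ)+1)*(p 1) := by ring
      push_cast at hc4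
      have h2 : p 2 = 0 := by omega
      rw [h2] at hc2 hc3 hc4
      have hA : (0:ℤ) ≤ p 0 :=
        le_of_mul_le_mul_left (by simpa using hc2) hq1
      have hB : (0:ℤ) ≤ p 1 :=
        le_of_mul_le_mul_left (by simpa using hc3) hq1
      have hAB : p 0 + p 1 ≤ 0 :=
        le_of_mul_le_mul_left (by simpa using hc4) hq1
      have h0 : p 0 = 0 ∧ p 1 = 0 := by omega
      have hx : (fun i => (p i : ℝ)) = (0 : Fin 3 → ℝ) := by
        funext i
        fin_cases i <;> simp [h0.1, h0.2, h2]
      have hPne : P.Nonempty := by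
        rw [hP]
        exact ⟨v0, subset_convexHull ℝ _ (by simp [hS])⟩
      rw [Nat.cast_zero, Set.zero_smul_set hPne, hx]
      exact Set.mem_singleton _
    · have hM : (0:ℝ) < m := by exact_mod_cast hm
      set Q : ℝ := (q:ℝ) + 1 with hQdef
      set w1 : ℝ := (Q * p 0 - p 2) / (Q * m) with hw1
      set w2 : ℝ := (Q * p 1 - (q:ℝ) * p 2) / (Q * m) with hw2
      set w3 : ℝ := (p 2 : ℝ) / (Q * m) with hw3
      have hQM : (0:ℝ) < Q * m := by positivity
      have hw1n : 0 ≤ w1 := div_nonneg (by linarith) hQM.le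
      have hw2n : 0 ≤ w2 := div_nonneg (by linarith) hQM.le
      have hw3n : 0 ≤ w3 := div_nonneg hp2' hQM.le
      have hwsum : w1 + w2 + w3 ≤ 1 := by
        rw [hw1, hw2, hw3, ← add_div, ← add_div, div_le_one hQM]
        linarith
      set wv : Fin 4 → ℝ := ![1 - w1 - w2 - w3, w1, w2, w3] with hwv
      set zv : Fin 4 → (Fin 3 → ℝ) := ![v0, v1, v2, v3] with hzv
      have hwn : ∀ i ∈ Finset.univ, 0 ≤ wv i := by
        intro i _
        fin_cases i <;> simp [hwv] <;> linarith
      have hws : ∑ i, wv i = 1 := by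
        rw [Fin.sum_univ_four]
        simp [hwv]
        ring
      have hzm : ∀ i ∈ Finset.univ, zv i ∈ convexHull ℝ S := by
        intro i _
        apply subset_convexHull
        fin_cases i <;> simp [hzv, hS]
      have hy : ∑ i, wv i • zv i ∈ convexHull ℝ S :=
        (convex_convexHull ℝ S).sum_mem hwn hws hzm
      rw [hP]
      refine ⟨∑ i, wv i • zv i, hy, ?_⟩
      have hcomp : ∀ i : Fin 3, ((m:ℝ) • ∑ j, wv j • zv j) i = ((p i : ℤ) : ℝ) := by
        have h0 : ((m:ℝ) • ∑ j, wv j • zv j) 0 = ((p 0 : ℤ) : ℝ) := by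
          simp only [Fin.sum_univ_four, Pi.smul_apply, Pi.add_apply, smul_eq_mul,
            hwv, hzv, hv0, hv1, hv2, hv3,
            Matrix.cons_val_zero, Matrix.cons_val_one, Matrix.head_cons,
            Matrix.cons_val_two, Matrix.cons_val_three, Matrix.tail_cons, Fin.isValue]
          rw [hw1, hw2, hw3]; field_simp; ring
        have h1 : ((m:ℝ) • ∑ j, wv j • zv j) 1 = ((p 1 : ℤ) : ℝ) := by
          simp only [Fin.sum_univ_four, Pi.smul_apply, Pi.add_apply, smul_eq_mul,
            hwv, hzv, hv0, hv1, hv2, hv3,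
            Matrix.cons_val_zero, Matrix.cons_val_one, Matrix.head_cons,
            Matrix.cons_val_two, Matrix.cons_val_three, Matrix.tail_cons, Fin.isValue]
          rw [hw1, hw2, hw3]; field_simp; ring
        have h2 : ((m:ℝ) • ∑ j, wv j • zv j) 2 = ((p 2 : ℤ) : ℝ) := by
          simp only [Fin.sum_univ_four, Pi.smul_apply, Pi.add_apply, smul_eq_mul,
            hwv, hzv, hv0, hv1, hv2, hv3,
            Matrix.cons_val_zero, Matrix.cons_val_one, Matrix.head_cons,
            Matrix.cons_val_two, Matrix.cons_val_three, Matrix.tail_cons, Fin.isValue]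
          rw [hw1, hw2, hw3]; field_simp; ring
        intro i
        fin_cases i
        exacts [h0, h1, h2]
      funext i
      exact hcomp i

end ReeveAux

/-- Let `R_q ⊆ ℝ³` be the Reeve tetrahedron, the convex hull of
`(0,0,0)`, `(1,0,0)`, `(0,1,0)` and `(1,q,q+1)`.  Then for every natural number `m`,
`6·#(m·R_q ∩ ℤ³) = (q+1)m³ + 6m² + (11 − q)m + 6` as integers; i.e. the Ehrhart
polynomial of `R_q` is `((q+1)/6)x³ + x² + ((11−q)/6)x + 1`. -/
theorem reeve_tetrahedron_ehrhart (q : ℕ) (P : Set (Fin 3 → ℝ))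
    (hP : P = convexHull ℝ
      {![0, 0, 0], ![1, 0, 0], ![0, 1, 0], ![1, (q : ℝ), (q : ℝ) + 1]}) :
    ∀ m : ℕ,
      6 * ({p : Fin 3 → ℤ | (fun i => (p i : ℝ)) ∈ (m : ℝ) • P}.ncard : ℤ) =
        ((q : ℤ) + 1) * (m : ℤ) ^ 3 + 6 * (m : ℤ) ^ 2 + (11 - (q : ℤ)) * (m : ℤ) + 6 := by
  intro m
  have hset : {p : Fin 3 → ℤ | (fun i => (p i : ℝ)) ∈ (m : ℝ) • P} = ReeveAux.Sol q m :=
    Set.ext fun p => ReeveAux.mem_dilate q m P hP p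
  rw [hset, ReeveAux.ncard_sol]
  cases m with
  | zero =>
    have h := ReeveAux.card_Dom q 0
    push_cast
    omega
  | succ n =>
    have h := ReeveAux.card_Dom q (n+1)
    simp only [Nat.add_sub_cancel] at h
    have hz : (6:ℤ) * ((ReeveAux.Dom q (n+1)).card : ℤ) =
        ((n:ℤ)+2)*((n:ℤ)+3)*((n:ℤ)+4) + (q:ℤ)*((n:ℤ)*((n:ℤ)+1)*((n:ℤ)+2)) := by
      exact_mod_cast h
    rw [hz]
    push_cast
    ring
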